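/- Let n ≥ 2 and let f : EuclideanSpace ℝ (Fin n) → ℝ be continuously differentiable (ContDiff ℝ 1 f) such that the level set M := f ⁻¹' {0} is compact and 0 is a regular value, i.e., fderiv ℝ f x ≠ 0 for every x ∈ M. Let σ : ℝ → EuclideanSpace ℝ (Fin n) be a continuously differentiable, injective, proper map (IsProperMap σ) which meets M transversely: for every t with f (σ t) = 0 one has deriv (f ∘ σ) t ≠ 0. Then the set {t : ℝ | f (σ t) = 0} is finite and its cardinality (Set.ncard) is even. -/

import Mathlib

open Set Metric Filter

lemma sign_iff_of_no_zero {g : ℝ → ℝ} (hg : Continuous g) {a b : ℝ} (hab : a < b)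
    (ha : g a ≠ 0) (hb : g b ≠ 0) (h : ∀ s ∈ Set.Ioo a b, g s ≠ 0) :
    (0 < g a ↔ 0 < g b) := by
  constructor
  · intro hga
    by_contra hgb
    have hgb' : g b < 0 := lt_of_le_of_ne (not_lt.1 hgb) hb
    obtain ⟨s, hs, hs0⟩ := intermediate_value_Ioo' hab.le (hg.continuousOn)
      (show (0:ℝ) ∈ Set.Ioo (g b) (g a) from ⟨hgb', hga⟩)
    exact h s hs hs0
  · intro hgb
    by_contra hga
    have hga' : g a < 0 := lt_of_le_of_ne (not_lt.1 hga) ha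
    obtain ⟨s, hs, hs0⟩ := intermediate_value_Ioo hab.le (hg.continuousOn)
      (show (0:ℝ) ∈ Set.Ioo (g a) (g b) from ⟨hga', hgb⟩)
    exact h s hs hs0


lemma flip_of_deriv {g : ℝ → ℝ} {t : ℝ} (hd : HasDerivAt g (deriv g t) t)
    (h0 : g t = 0) (hc : deriv g t ≠ 0) :
    ∀ᶠ s in nhdsWithin t {t}ᶜ, 0 < g s * (s - t) * deriv g t := by
  set c := deriv g t with hcdef
  have hslope := hasDerivAt_iff_tendsto_slope.1 hd
  have hmem : {y : ℝ | 0 < y * c} ∈ nhds c := by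
    have : IsOpen {y : ℝ | 0 < y * c} :=
      isOpen_lt continuous_const (continuous_id.mul continuous_const)
    exact this.mem_nhds (mul_self_pos.2 hc)
  filter_upwards [hslope hmem, self_mem_nhdsWithin] with s hs hst
  have hs' : 0 < slope g t s * c := hs
  have hst' : s - t ≠ 0 := sub_ne_zero.2 hst
  have heq : slope g t s = g s / (s - t) := by
    rw [slope_def_field, h0, sub_zero, div_eq_div_iff hst' hst']
  rw [heq] at hs'
  have h2 : 0 < (g s / (s - t)) * c * (s - t)^2 := by positivity
  have h3 : (g s / (s - t)) * c * (s - t)^2 = g s * (s - t) * c := by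
    field_simp
  linarith [h3 ▸ h2]

lemma parity_key {g : ℝ → ℝ} (hg : Continuous g)
    (hflip : ∀ t, g t = 0 → ∀ᶠ s in nhdsWithin t {t}ᶜ, 0 < g s * (s - t) * deriv g t) :
    ∀ k : ℕ, ∀ a b : ℝ, a < b → g a ≠ 0 → g b ≠ 0 →
      {t ∈ Set.Ioo a b | g t = 0}.Finite → {t ∈ Set.Ioo a b | g t = 0}.ncard = k →
      (Even k ↔ (0 < g a ↔ 0 < g b)) := by
  intro k
  induction k with
  | zero =>
    intro a b hab ha hb hfin hcard
    have hZ : {t ∈ Set.Ioo a b | g t = 0} = ∅ := (Set.ncard_eq_zero hfin).1 hcard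
    have : ∀ s ∈ Set.Ioo a b, g s ≠ 0 := by
      intro s hs hs0
      have hm : s ∈ {t ∈ Set.Ioo a b | g t = 0} := ⟨hs, hs0⟩
      rw [hZ] at hm
      exact Set.notMem_empty s hm
    simpa using (sign_iff_of_no_zero hg hab ha hb this)
  | succ k ih =>
    intro a b hab ha hb hfin hcard
    set Z := {t ∈ Set.Ioo a b | g t = 0} with hZdef
    have hZne : Z.Nonempty := Set.nonempty_of_ncard_ne_zero (by omega)
    -- minimum of Z
    set t₀ := sInf Z with ht₀def
    have ht₀Z : t₀ ∈ Z := hZne.csInf_mem hfin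
    have ht₀min : ∀ t ∈ Z, t₀ ≤ t := fun t ht => csInf_le hfin.bddBelow ht
    obtain ⟨⟨hat₀, ht₀b⟩, hgt₀⟩ := ht₀Z
    -- u : next zero or b
    set W := insert b (Z \ {t₀}) with hWdef
    have hWfin : W.Finite := (hfin.diff : (Z \ {t₀}).Finite).insert b
    have hWne : W.Nonempty := ⟨b, Set.mem_insert _ _⟩
    set u := sInf W with hudef
    have huW : u ∈ W := hWne.csInf_mem hWfin
    have hub : u ≤ b := csInf_le hWfin.bddBelow (Set.mem_insert _ _)
    have ht₀u : t₀ < u := by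
      rcases huW with h | ⟨hZ', hne⟩
      · rw [h]; exact ht₀b
      · exact lt_of_le_of_ne (ht₀min u hZ') (Ne.symm hne)
    have humin : ∀ t ∈ Z, t ≠ t₀ → u ≤ t := fun t ht hne =>
      csInf_le hWfin.bddBelow (Set.mem_insert_of_mem _ ⟨ht, hne⟩)
    -- flip at t₀ : extract δ
    obtain ⟨δ, hδpos, hδ⟩ := Metric.eventually_nhds_iff.1 (eventually_nhdsWithin_iff.1 (hflip t₀ hgt₀))
    set c := deriv g t₀ with hcdef
    -- choose s₁ ∈ (a, t₀) and s₂ ∈ (t₀, u) within δ of t₀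
    set s₁ := t₀ - min δ (t₀ - a) / 2 with hs₁def
    set s₂ := t₀ + min δ (u - t₀) / 2 with hs₂def
    have hmin1 : 0 < min δ (t₀ - a) := lt_min hδpos (by linarith)
    have hmin2 : 0 < min δ (u - t₀) := lt_min hδpos (by linarith)
    have hs₁lt : s₁ < t₀ := by simp only [hs₁def]; linarith
    have has₁ : a < s₁ := by
      have := min_le_right δ (t₀ - a); simp only [hs₁def]; linarith
    have hs₂gt : t₀ < s₂ := by simp only [hs₂def]; linarith
    have hs₂u : s₂ < u := by
      have := min_le_right δ (u - t₀); simp only [hs₂def]; linarith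
    have hd₁ : dist s₁ t₀ < δ := by
      rw [Real.dist_eq, abs_sub_lt_iff]
      have := min_le_left δ (t₀ - a)
      constructor <;> simp only [hs₁def] <;> linarith
    have hd₂ : dist s₂ t₀ < δ := by
      rw [Real.dist_eq, abs_sub_lt_iff]
      have := min_le_left δ (u - t₀)
      constructor <;> simp only [hs₂def] <;> linarith
    have hP₁ : 0 < g s₁ * (s₁ - t₀) * c :=
      hδ hd₁ (by intro h; rw [Set.mem_singleton_iff] at h; linarith)
    have hP₂ : 0 < g s₂ * (s₂ - t₀) * c :=
      hδ hd₂ (by intro h; rw [Set.mem_singleton_iff] at h; linarith)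
    have hA : 0 < g s₂ * c := by nlinarith
    have hB : g s₁ * c < 0 := by nlinarith
    have hcne : c ≠ 0 := by intro h; rw [h] at hA; simp at hA
    have hflip12 : g s₁ * g s₂ < 0 := by nlinarith [mul_self_pos.2 hcne]
    have hgs₁ne : g s₁ ≠ 0 := fun h => by rw [h] at hB; simp at hB
    have hgs₂ne : g s₂ ≠ 0 := fun h => by rw [h] at hA; simp at hA
    -- no zeros in (a, s₁)
    have hsign_a_s₁ : (0 < g a ↔ 0 < g s₁) := by
      apply sign_iff_of_no_zero hg has₁ ha hgs₁ne
      intro s hs hs0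
      have hsZ : s ∈ Z := ⟨⟨hs.1, by linarith [hs.2]⟩, hs0⟩
      have := ht₀min s hsZ
      linarith [hs.2]
    -- zeros in (s₂, b) are exactly Z \ {t₀}
    have hZ' : {t ∈ Set.Ioo s₂ b | g t = 0} = Z \ {t₀} := by
      ext z
      constructor
      · rintro ⟨⟨h1, h2⟩, h3⟩
        exact ⟨⟨⟨by linarith, h2⟩, h3⟩, by intro h; rw [Set.mem_singleton_iff] at h; subst h; linarith⟩
      · rintro ⟨⟨⟨h1, h2⟩, h3⟩, h4⟩
        rw [Set.mem_singleton_iff] at h4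
        have := humin z ⟨⟨h1, h2⟩, h3⟩ h4
        exact ⟨⟨by linarith, h2⟩, h3⟩
    have hfin' : {t ∈ Set.Ioo s₂ b | g t = 0}.Finite := hZ' ▸ (hfin.diff : (Z \ {t₀}).Finite)
    have hcard' : {t ∈ Set.Ioo s₂ b | g t = 0}.ncard = k := by
      rw [hZ', Set.ncard_diff_singleton_of_mem (show t₀ ∈ Z from ⟨⟨hat₀, ht₀b⟩, hgt₀⟩), hcard]
      omega
    have hs₂b : s₂ < b := lt_of_lt_of_le hs₂u hub
    have hIH := ih s₂ b hs₂b hgs₂ne hb hfin' hcard'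
    clear_value Z t₀ W u c s₁ s₂
    -- combine
    have e1 : 0 < g a ↔ ¬ (0 < g s₂) := by
      rw [hsign_a_s₁]
      constructor
      · intro h h2
        exact absurd hflip12 (not_lt.2 (mul_pos h h2).le)
      · intro h
        have h2 : g s₂ < 0 := lt_of_le_of_ne (not_lt.1 h) hgs₂ne
        by_contra h3
        have h3' : g s₁ < 0 := lt_of_le_of_ne (not_lt.1 h3) hgs₁ne
        exact absurd hflip12 (not_lt.2 (mul_pos_of_neg_of_neg h3' h2).le)
    rw [Nat.even_add_one, hIH, e1, not_iff]



lemma connected_norm_gt (n : ℕ) (hn : 2 ≤ n) (R : ℝ) (hR : 0 < R) :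
    IsPreconnected {x : EuclideanSpace ℝ (Fin n) | R < ‖x‖} := by
  have hrank : 1 < Module.rank ℝ (EuclideanSpace ℝ (Fin n)) := by
    rw [← Module.finrank_eq_rank, finrank_euclideanSpace_fin]
    exact_mod_cast hn
  have hsph : IsConnected (sphere (0 : EuclideanSpace ℝ (Fin n)) 1) :=
    isConnected_sphere hrank 0 zero_le_one
  have hIoi : IsConnected (Set.Ioi R) := isConnected_Ioi
  have hprod := hsph.prod hIoi
  have himg := hprod.image (fun p : EuclideanSpace ℝ (Fin n) × ℝ => p.2 • p.1)
    (Continuous.continuousOn (continuous_snd.smul continuous_fst))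
  have heq : (fun p : EuclideanSpace ℝ (Fin n) × ℝ => p.2 • p.1) ''
      (sphere 0 1 ×ˢ Set.Ioi R) = {x : EuclideanSpace ℝ (Fin n) | R < ‖x‖} := by
    ext x
    constructor
    · rintro ⟨⟨v, t⟩, ⟨hv, ht⟩, rfl⟩
      rw [mem_sphere_zero_iff_norm] at hv
      simp only [Set.mem_setOf_eq, norm_smul, hv, mul_one, Real.norm_eq_abs]
      rw [Set.mem_Ioi] at ht
      rw [abs_of_pos (lt_trans hR ht)]
      exact ht
    · intro hx
      rw [Set.mem_setOf_eq] at hx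
      have hxne : ‖x‖ ≠ 0 := (lt_trans hR hx).ne'
      refine ⟨⟨‖x‖⁻¹ • x, ‖x‖⟩, ⟨?_, hx⟩, ?_⟩
      · rw [mem_sphere_zero_iff_norm, norm_smul, norm_inv, norm_norm,
          inv_mul_cancel₀ hxne]
      · simp only [smul_smul, mul_inv_cancel₀ hxne, one_smul]
  rw [heq] at himg
  exact himg.isPreconnected

/-- Proposition 5.4.2: a smooth properly embedded line in `ℝⁿ` meets a compact smooth
regular level hypersurface `M = f⁻¹(0)` transversely in an even (finite) number of
points. -/
theorem proper_line_meets_closed_hypersurface_evenly (n : ℕ) (hn : 2 ≤ n)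
    (f : EuclideanSpace ℝ (Fin n) → ℝ) (hf : ContDiff ℝ 1 f)
    (hMc : IsCompact (f ⁻¹' {0}))
    (hreg : ∀ x ∈ f ⁻¹' {0}, fderiv ℝ f x ≠ 0)
    (σ : ℝ → EuclideanSpace ℝ (Fin n)) (hσ : ContDiff ℝ 1 σ)
    (hσinj : Function.Injective σ) (hσprop : IsProperMap σ)
    (htrans : ∀ t : ℝ, f (σ t) = 0 → deriv (f ∘ σ) t ≠ 0) :
    {t : ℝ | f (σ t) = 0}.Finite ∧ Even {t : ℝ | f (σ t) = 0}.ncard := by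
  have hgc : ContDiff ℝ 1 (f ∘ σ) := hf.comp hσ
  have hgdiff : Differentiable ℝ (f ∘ σ) := hgc.differentiable one_ne_zero
  set g : ℝ → ℝ := f ∘ σ with hgdef
  have hSeq : {t : ℝ | f (σ t) = 0} = {t : ℝ | g t = 0} := rfl
  have hSpre : {t : ℝ | g t = 0} = σ ⁻¹' (f ⁻¹' {0}) := by
    ext t; simp [hgdef, Function.comp]
  have hScompact : IsCompact {t : ℝ | g t = 0} := by
    rw [hSpre]; exact hσprop.isCompact_preimage hMc
  have hflip : ∀ t, g t = 0 → ∀ᶠ s in nhdsWithin t {t}ᶜ, 0 < g s * (s - t) * deriv g t :=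
    fun t ht => flip_of_deriv (hgdiff t).hasDerivAt ht (htrans t ht)
  -- finiteness
  have hfin : {t : ℝ | g t = 0}.Finite := by
    apply hScompact.finite
    rw [isDiscrete_iff_discreteTopology, discreteTopology_subtype_iff]
    intro x hx
    rw [inf_principal_eq_bot]
    refine mem_of_superset (hflip x hx) ?_
    intro s hs hsS
    rw [Set.mem_setOf_eq] at hsS hs
    rw [hsS] at hs
    simp at hs
  refine ⟨hSeq ▸ hfin, ?_⟩
  -- evenness
  obtain ⟨R₀, hR₀⟩ := hMc.isBounded.subset_closedBall 0
  set R := max R₀ 1 with hRdef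
  have hRpos : (0:ℝ) < R := lt_of_lt_of_le one_pos (le_max_right _ _)
  have hMR : f ⁻¹' {0} ⊆ closedBall 0 R :=
    hR₀.trans (closedBall_subset_closedBall (le_max_left _ _))
  have hCconn := connected_norm_gt n hn R hRpos
  have hfC : ∀ x : EuclideanSpace ℝ (Fin n), R < ‖x‖ → f x ≠ 0 := by
    intro x hx hx0
    have : x ∈ closedBall (0 : EuclideanSpace ℝ (Fin n)) R := hMR hx0
    rw [mem_closedBall_zero_iff] at this
    linarith
  have hsignC : ∀ x y : EuclideanSpace ℝ (Fin n), R < ‖x‖ → R < ‖y‖ →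
      (0 < f x ↔ 0 < f y) := by
    intro x y hx hy
    by_contra hcon
    rw [not_iff] at hcon
    have key : ∀ u v : EuclideanSpace ℝ (Fin n), R < ‖u‖ → R < ‖v‖ →
        f u ≤ 0 → 0 < f v → False := by
      intro u v hu hv hfu hfv
      have h0 : (0:ℝ) ∈ Set.Icc (f u) (f v) := ⟨hfu, hfv.le⟩
      obtain ⟨z, hz, hz0⟩ := hCconn.intermediate_value (a := u) (b := v) hu hv
        (hf.continuous.continuousOn) h0
      exact hfC z hz hz0
    rcases lt_or_ge 0 (f x) with hfx | hfx
    · have hfy : ¬ 0 < f y := fun h => (hcon.2 h) hfx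
      exact key y x hy hx (not_lt.1 hfy) hfx
    · have hfy : 0 < f y := hcon.1 (not_lt.2 hfx)
      exact key x y hx hy hfx hfy
  -- bound the preimage of the ball
  have hKcomp : IsCompact (σ ⁻¹' closedBall 0 R) :=
    hσprop.isCompact_preimage (isCompact_closedBall 0 R)
  obtain ⟨T, hT⟩ := hKcomp.isBounded.subset_closedBall 0
  set T' := max T 0 with hT'def
  set a := -T' - 1 with hadef
  set b := T' + 1 with hbdef
  have hT'0 : (0:ℝ) ≤ T' := le_max_right _ _
  have hab : a < b := by rw [hadef, hbdef]; linarith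
  have houtside : ∀ t : ℝ, T' < |t| → R < ‖σ t‖ := by
    intro t ht
    by_contra h
    have : σ t ∈ closedBall (0 : EuclideanSpace ℝ (Fin n)) R := by
      rw [mem_closedBall_zero_iff]; linarith [not_lt.1 h]
    have ht2 : t ∈ closedBall (0:ℝ) T := hT this
    rw [Real.closedBall_eq_Icc] at ht2
    obtain ⟨h1, h2⟩ := ht2
    have h3 : T ≤ T' := le_max_left T 0
    rcases abs_cases t with ⟨he, _⟩ | ⟨he, _⟩ <;> linarith
  have haO : R < ‖σ a‖ := houtside a (by rw [abs_of_neg (by rw [hadef]; linarith)]; rw [hadef]; linarith)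
  have hbO : R < ‖σ b‖ := houtside b (by rw [abs_of_pos (by rw [hbdef]; linarith)]; rw [hbdef]; linarith)
  have hga : g a ≠ 0 := hfC (σ a) haO
  have hgb : g b ≠ 0 := hfC (σ b) hbO
  have hzeros : {t ∈ Set.Ioo a b | g t = 0} = {t : ℝ | g t = 0} := by
    ext t
    simp only [Set.mem_setOf_eq, Set.mem_Ioo]
    constructor
    · rintro ⟨_, h⟩; exact h
    · intro h
      have hmem : σ t ∈ closedBall (0 : EuclideanSpace ℝ (Fin n)) R := hMR h
      have ht2 : t ∈ closedBall (0:ℝ) T := hT hmem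
      rw [mem_closedBall_zero_iff, Real.norm_eq_abs] at ht2
      have h3 : T ≤ T' := le_max_left T 0
      obtain ⟨h4, h5⟩ := abs_le.1 ht2
      exact ⟨⟨by rw [hadef]; linarith, by rw [hbdef]; linarith⟩, h⟩
  have hpar := parity_key hgc.continuous hflip ({t : ℝ | g t = 0}.ncard) a b hab hga hgb
    (hzeros ▸ hfin) (by rw [hzeros])
  rw [hSeq]
  exact hpar.2 (hsignC (σ a) (σ b) haO hbO)
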